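/- Let H = (V,F,z) be a directed hypergraph, S ⊆ F a λ-coreset of H, and x ∈ ℝ^V with x^⊤L_H(x) = 1. For i ∈ ℤ, let F_i^x = {f ∈ F∖S : Q_H^x(f) ∈ [1/(2^i λ), 1/(2^{i−1} λ))} and let E_i^x be the set of pairs (u,v) that are x-critical pairs of some f ∈ F_i^x. Then |E_i^x| < 2^i. -/

import Mathlib

open Finset Classical

/-- Let `H = (V,F,z)` be a directed hypergraph, `S ⊆ F` a `λ`-coreset (given with its
partition `Suv`), and `x ∈ ℝ^V` with `xᵀ L_H(x) = 1`.  For `i ∈ ℤ` let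
`F_i^x = {f ∈ F \ S : Q_H^x(f) ∈ [1/(2^i λ), 1/(2^{i−1} λ))}` and let `E_i^x` be the set of
`x`-critical pairs of hyperarcs in `F_i^x`.  Then `|E_i^x| < 2^i`. -/
theorem stmt2 {V α : Type*} [Fintype V] [DecidableEq V] [DecidableEq α]
    (F : Finset α) (t h : α → Finset V) (z : α → ℝ) (hz : ∀ f ∈ F, 0 ≤ z f)
    (lam : ℕ) (hlam : 0 < lam)
    (S : Finset α) (hSF : S ⊆ F)
    (Suv : V × V → Finset α)
    (hdisj : ∀ p q : V × V, p ≠ q → Disjoint (Suv p) (Suv q))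
    (hS : S = Finset.univ.biUnion Suv)
    (hmem : ∀ p : V × V, ∀ f ∈ Suv p, p.1 ∈ t f ∧ p.2 ∈ h f)
    (hfull : ∀ p : V × V, (∃ f ∈ F \ S, p.1 ∈ t f ∧ p.2 ∈ h f) → (Suv p).card = lam)
    (hheavy : ∀ p : V × V, ∀ f ∈ Suv p, ∀ f' ∈ F \ S,
      p.1 ∈ t f' → p.2 ∈ h f' → z f' ≤ z f)
    (x : V → ℝ) (crit : α → V × V)
    (hcrit : ∀ f ∈ F, (crit f).1 ∈ t f ∧ (crit f).2 ∈ h f)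
    (hmax : ∀ f ∈ F, ∀ u ∈ t f, ∀ v ∈ h f,
      (max (x u - x v) 0) ^ 2 ≤ (max (x (crit f).1 - x (crit f).2) 0) ^ 2)
    (Q : α → ℝ) (hQ : ∀ f, Q f = z f * (max (x (crit f).1 - x (crit f).2) 0) ^ 2)
    (hnorm : ∑ f ∈ F, Q f = 1)
    (i : ℤ)
    (Fi : Finset α)
    (hFi : Fi = (F \ S).filter
      (fun f => (2 : ℝ) ^ (-i) / lam ≤ Q f ∧ Q f < (2 : ℝ) ^ (-(i - 1)) / lam)) :
    ((Fi.image crit).card : ℝ) < (2 : ℝ) ^ i := by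
  classical
  have hQpos : ∀ f ∈ F, 0 ≤ Q f := fun f hf => by
    rw [hQ]; exact mul_nonneg (hz f hf) (sq_nonneg _)
  have hFiF : Fi ⊆ F \ S := by rw [hFi]; exact filter_subset _ _
  have hSsub : ∀ p, Suv p ⊆ S := fun p => by
    rw [hS]; exact subset_biUnion_of_mem Suv (mem_univ p)
  set T := Fi.image crit with hT
  have hcpos : (0:ℝ) < (2:ℝ) ^ (-i) / lam := by positivity
  have key : ∀ p ∈ T, ∀ g ∈ Suv p, (2:ℝ)^(-i)/(lam:ℝ) ≤ Q g := by
    intro p hp g hg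
    obtain ⟨f, hf, hfp⟩ := mem_image.mp hp
    have hfFS := hFiF hf
    have hfF := (mem_sdiff.mp hfFS).1
    have hgF : g ∈ F := hSF (hSsub p hg)
    obtain ⟨h1, h2⟩ := hmem p g hg
    have hzg : z f ≤ z g :=
      hheavy p g hg f hfFS (hfp ▸ (hcrit f hfF).1) (hfp ▸ (hcrit f hfF).2)
    have hsq := hmax g hgF p.1 h1 p.2 h2
    have hQf : (2:ℝ)^(-i)/(lam:ℝ) ≤ Q f := by
      rw [hFi] at hf; exact (mem_filter.mp hf).2.1
    calc (2:ℝ)^(-i)/(lam:ℝ) ≤ Q f := hQf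
      _ = z f * (max (x (crit f).1 - x (crit f).2) 0)^2 := hQ f
      _ = z f * (max (x p.1 - x p.2) 0)^2 := by rw [hfp]
      _ ≤ z g * (max (x p.1 - x p.2) 0)^2 :=
          mul_le_mul_of_nonneg_right hzg (sq_nonneg _)
      _ ≤ z g * (max (x (crit g).1 - x (crit g).2) 0)^2 :=
          mul_le_mul_of_nonneg_left hsq (hz g hgF)
      _ = Q g := (hQ g).symm
  rcases eq_or_ne T ∅ with hTe | hTne
  · rw [hTe]; simpa using zpow_pos (by norm_num : (0:ℝ) < 2) i
  have hFine : Fi.Nonempty := by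
    rcases nonempty_of_ne_empty hTne with ⟨p, hp⟩
    obtain ⟨f, hf, _⟩ := mem_image.mp hp
    exact ⟨f, hf⟩
  have hcard : ∀ p ∈ T, (Suv p).card = lam := by
    intro p hp
    obtain ⟨f, hf, hfp⟩ := mem_image.mp hp
    have hfFS := hFiF hf
    have hfF := (mem_sdiff.mp hfFS).1
    exact hfull p ⟨f, hfFS, hfp ▸ (hcrit f hfF).1, hfp ▸ (hcrit f hfF).2⟩
  have hB : T.biUnion Suv ⊆ F := by
    intro g hg; obtain ⟨p, _, hg⟩ := mem_biUnion.mp hg; exact hSF (hSsub p hg)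
  have hdisjBFi : Disjoint (T.biUnion Suv) Fi := by
    rw [disjoint_left]; intro g hg hgFi
    obtain ⟨p, _, hg⟩ := mem_biUnion.mp hg
    exact (mem_sdiff.mp (hFiF hgFi)).2 (hSsub p hg)
  have hunion : T.biUnion Suv ∪ Fi ⊆ F :=
    union_subset hB (hFiF.trans sdiff_subset)
  have hsum1 : ∑ f ∈ T.biUnion Suv ∪ Fi, Q f ≤ 1 := by
    rw [← hnorm]
    exact sum_le_sum_of_subset_of_nonneg hunion (fun f hf _ => hQpos f hf)
  rw [sum_union hdisjBFi] at hsum1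
  have hlamR : (0:ℝ) < (lam:ℝ) := by exact_mod_cast hlam
  have hsumB : (T.card : ℝ) * ((2:ℝ)^(-i)) ≤ ∑ f ∈ T.biUnion Suv, Q f := by
    rw [sum_biUnion (fun p _ q _ hpq => hdisj p q hpq)]
    have hpoint : ∀ p ∈ T, (2:ℝ)^(-i) ≤ ∑ g ∈ Suv p, Q g := by
      intro p hp
      have h1 := Finset.card_nsmul_le_sum (Suv p) Q ((2:ℝ)^(-i)/(lam:ℝ))
        (fun g hg => key p hp g hg)
      rw [hcard p hp, nsmul_eq_mul] at h1
      calc (2:ℝ)^(-i) = (lam:ℝ) * ((2:ℝ)^(-i)/(lam:ℝ)) := by field_simp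
        _ ≤ ∑ g ∈ Suv p, Q g := h1
    calc (T.card:ℝ) * (2:ℝ)^(-i) = ∑ p ∈ T, (2:ℝ)^(-i) := by
          rw [sum_const, nsmul_eq_mul]
      _ ≤ _ := sum_le_sum hpoint
  have hsumFi : 0 < ∑ f ∈ Fi, Q f := by
    apply sum_pos (fun f hf => lt_of_lt_of_le hcpos ?_) hFine
    rw [hFi] at hf; exact (mem_filter.mp hf).2.1
  have hlt : (T.card : ℝ) * (2:ℝ)^(-i) < 1 := by linarith
  have h2 : (T.card:ℝ) < 1 / (2:ℝ)^(-i) :=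
    (lt_div_iff₀ (zpow_pos (by norm_num : (0:ℝ) < 2) (-i))).mpr hlt
  rwa [one_div, zpow_neg, inv_inv] at h2
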